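/- Green's theorem along a straight-line homotopy: let A : ℝ² → ℝ² be a C¹ vector field with β := ∂₁A₂ − ∂₂A₁, let T > 0, and let γ, σ : [0,T] → ℝ² be C¹ paths with the same endpoints, γ(0) = σ(0) and γ(T) = σ(T). Define Γ(s,t) := s·σ(t) + (1−s)·γ(t) for (s,t) ∈ [0,1]×[0,T]. Then ∫₀^T A(σ(t))·σ'(t) dt − ∫₀^T A(γ(t))·γ'(t) dt = ∫₀¹ ∫₀^T β(Γ(s,t)) · [ (σ(t) − γ(t)) × (s σ'(t) + (1−s) γ'(t)) ] dt ds, where u × v := u₁v₂ − u₂v₁ for u, v ∈ ℝ². -/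

import Mathlib

open MeasureTheory Real

noncomputable section

abbrev R2 : Type := EuclideanSpace ℝ (Fin 2)

def pdR (i : Fin 2) (g : R2 → ℝ) (x : R2) : ℝ := fderiv ℝ g x (EuclideanSpace.single i 1)

/-- the planar curl `∂₁A₂ − ∂₂A₁` -/
def curl (A : R2 → R2) (x : R2) : ℝ := pdR 0 (fun z => A z 1) x - pdR 1 (fun z => A z 0) x

/-- the planar cross product `u₁v₂ − u₂v₁` -/
def cross (u v : R2) : ℝ := u 0 * v 1 - u 1 * v 0

/-- the Euclidean dot product on `ℝ²` -/
def dot (u v : R2) : ℝ := u 0 * v 0 + u 1 * v 1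

lemma cont_coord (i : Fin 2) : Continuous (fun x : R2 => x i) :=
  (EuclideanSpace.proj (𝕜 := ℝ) i).continuous

lemma R2decomp (x : R2) :
    x = x 0 • (EuclideanSpace.single 0 1 : R2) + x 1 • EuclideanSpace.single 1 1 := by
  ext i
  fin_cases i <;> simp [EuclideanSpace.single_apply]

lemma clm_apply_coord (L : R2 →L[ℝ] R2) (w : R2) (i : Fin 2) :
    L w i = w 0 * L (EuclideanSpace.single 0 1) i + w 1 * L (EuclideanSpace.single 1 1) i := by
  conv_lhs => rw [R2decomp w]
  simp

lemma clm_antisym (L : R2 →L[ℝ] R2) (u v : R2) :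
    dot (L u) v - dot (L v) u
      = (L (EuclideanSpace.single 0 1) 1 - L (EuclideanSpace.single 1 1) 0) * cross u v := by
  simp only [dot, cross]
  rw [clm_apply_coord L u 0, clm_apply_coord L u 1, clm_apply_coord L v 0, clm_apply_coord L v 1]
  ring

lemma dot_eq_inner (u v : R2) : dot u v = (inner ℝ u v : ℝ) := by
  simp [dot, PiLp.inner_apply, RCLike.inner_apply, Fin.sum_univ_two]
  ring

lemma fderiv_coord (f : R2 → R2) (x : R2) (hf : DifferentiableAt ℝ f x) (i : Fin 2) :
    fderiv ℝ (fun z => f z i) x = (EuclideanSpace.proj (𝕜 := ℝ) i).comp (fderiv ℝ f x) :=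
  ((EuclideanSpace.proj (𝕜 := ℝ) i).hasFDerivAt.comp x hf.hasFDerivAt).fderiv

lemma curl_eq (A : R2 → R2) (x : R2) (hA : DifferentiableAt ℝ A x) :
    curl A x = fderiv ℝ A x (EuclideanSpace.single 0 1) 1
      - fderiv ℝ A x (EuclideanSpace.single 1 1) 0 := by
  simp [curl, pdR, fderiv_coord _ _ hA]

lemma curl_cont (A : R2 → R2) (hA : ContDiff ℝ 1 A) : Continuous (curl A) := by
  have h1 : Continuous (fun x => fderiv ℝ A x) := hA.continuous_fderiv one_ne_zero
  have : curl A = fun x => fderiv ℝ A x (EuclideanSpace.single 0 1) 1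
      - fderiv ℝ A x (EuclideanSpace.single 1 1) 0 :=
    funext fun x => curl_eq A x (hA.differentiable one_ne_zero x)
  rw [this]
  exact ((cont_coord 1).comp (h1.clm_apply continuous_const)).sub
    ((cont_coord 0).comp (h1.clm_apply continuous_const))

lemma dot_cont : Continuous (fun p : R2 × R2 => dot p.1 p.2) := by
  unfold dot
  exact (((cont_coord 0).comp continuous_fst).mul ((cont_coord 0).comp continuous_snd)).add
    (((cont_coord 1).comp continuous_fst).mul ((cont_coord 1).comp continuous_snd))

lemma cross_cont : Continuous (fun p : R2 × R2 => cross p.1 p.2) := by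
  unfold cross
  exact (((cont_coord 0).comp continuous_fst).mul ((cont_coord 1).comp continuous_snd)).sub
    (((cont_coord 1).comp continuous_fst).mul ((cont_coord 0).comp continuous_snd))

/-- Green's theorem along the straight-line homotopy
`Γ(s,t) = s σ(t) + (1−s) γ(t)` between two `C¹` paths with common endpoints:
`∫ A(σ)·σ' − ∫ A(γ)·γ' = ∫₀¹∫₀ᵀ β(Γ(s,t)) [(σ−γ) × (sσ' + (1−s)γ')] dt ds`. -/
theorem greens_theorem_homotopy
    (A : R2 → R2) (hA : ContDiff ℝ 1 A) (T : ℝ) (hT : 0 < T)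
    (γ σ : ℝ → R2) (hγ : ContDiff ℝ 1 γ) (hσ : ContDiff ℝ 1 σ)
    (h0 : γ 0 = σ 0) (h1 : γ T = σ T) :
    (∫ t in (0:ℝ)..T, dot (A (σ t)) (deriv σ t))
      - (∫ t in (0:ℝ)..T, dot (A (γ t)) (deriv γ t))
      = ∫ s in (0:ℝ)..1, ∫ t in (0:ℝ)..T,
          curl A (s • σ t + (1 - s) • γ t) *
            cross (σ t - γ t) (s • deriv σ t + (1 - s) • deriv γ t) := by
  have hAd : Differentiable ℝ A := hA.differentiable one_ne_zero
  have hσd : ∀ t, HasDerivAt σ (deriv σ t) t := fun t => (hσ.differentiable one_ne_zero t).hasDerivAt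
  have hγd : ∀ t, HasDerivAt γ (deriv γ t) t := fun t => (hγ.differentiable one_ne_zero t).hasDerivAt
  set Γ : ℝ → ℝ → R2 := fun s t => s • σ t + (1 - s) • γ t with hΓdef
  set V : ℝ → ℝ → R2 := fun s t => s • deriv σ t + (1 - s) • deriv γ t with hVdef
  set U : ℝ → R2 := fun t => σ t - γ t with hUdef
  set W : ℝ → R2 := fun t => deriv σ t - deriv γ t with hWdef
  set F : ℝ → ℝ → ℝ := fun s t => curl A (Γ s t) * cross (U t) (V s t) with hFdef
  set P : ℝ → ℝ → ℝ := fun s t =>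
    dot (fderiv ℝ A (Γ s t) (V s t)) (U t) + dot (A (Γ s t)) (W t) with hPdef
  set g : ℝ → ℝ → ℝ := fun s t => dot (A (Γ s t)) (V s t) with hgdef
  set h : ℝ → ℝ → ℝ := fun s t => dot (A (Γ s t)) (U t) with hhdef
  -- continuity facts
  have hσc : Continuous σ := hσ.continuous
  have hγc : Continuous γ := hγ.continuous
  have hσ'c : Continuous (deriv σ) := hσ.continuous_deriv le_rfl
  have hγ'c : Continuous (deriv γ) := hγ.continuous_deriv le_rfl
  have hΓc : Continuous (fun p : ℝ × ℝ => Γ p.1 p.2) := by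
    apply Continuous.add
    · exact continuous_fst.smul (hσc.comp continuous_snd)
    · exact (continuous_const.sub continuous_fst).smul (hγc.comp continuous_snd)
  have hVc : Continuous (fun p : ℝ × ℝ => V p.1 p.2) := by
    apply Continuous.add
    · exact continuous_fst.smul (hσ'c.comp continuous_snd)
    · exact (continuous_const.sub continuous_fst).smul (hγ'c.comp continuous_snd)
  have hUc : Continuous U := hσc.sub hγc
  have hWc : Continuous (W) := hσ'c.sub hγ'c
  have hfd : Continuous (fun x => fderiv ℝ A x) := hA.continuous_fderiv one_ne_zero
  have hFc : Continuous (fun p : ℝ × ℝ => F p.1 p.2) := by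
    apply Continuous.mul
    · exact (curl_cont A hA).comp hΓc
    · exact cross_cont.comp ((hUc.comp continuous_snd).prodMk hVc)
  have hPc : Continuous (fun p : ℝ × ℝ => P p.1 p.2) := by
    apply Continuous.add
    · exact dot_cont.comp ((((hfd.comp hΓc).clm_apply hVc)).prodMk (hUc.comp continuous_snd))
    · exact dot_cont.comp ((hA.continuous.comp hΓc).prodMk (hWc.comp continuous_snd))
  have hFPc : Continuous (fun p : ℝ × ℝ => F p.1 p.2 + P p.1 p.2) := hFc.add hPc
  -- derivative in s of g
  have key1 : ∀ s t, HasDerivAt (fun s' => g s' t) (F s t + P s t) s := by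
    intro s t
    have hΓs : HasDerivAt (fun s' => Γ s' t) (U t) s := by
      have h1 : HasDerivAt (fun s' : ℝ => s' • σ t) ((1:ℝ) • σ t) s :=
        (hasDerivAt_id s).smul_const _
      have h2 : HasDerivAt (fun s' : ℝ => (1 - s') • γ t) ((0 - 1 : ℝ) • γ t) s :=
        ((hasDerivAt_const s (1:ℝ)).sub (hasDerivAt_id s)).smul_const _
      have := h1.add h2
      simp only [one_smul, zero_sub, neg_smul, one_smul] at this
      exact this.congr_deriv (by simp [hUdef, sub_eq_add_neg])
    have hVs : HasDerivAt (fun s' => V s' t) (W t) s := by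
      have h1 : HasDerivAt (fun s' : ℝ => s' • deriv σ t) ((1:ℝ) • deriv σ t) s :=
        (hasDerivAt_id s).smul_const _
      have h2 : HasDerivAt (fun s' : ℝ => (1 - s') • deriv γ t) ((0 - 1 : ℝ) • deriv γ t) s :=
        ((hasDerivAt_const s (1:ℝ)).sub (hasDerivAt_id s)).smul_const _
      have := h1.add h2
      simp only [one_smul, zero_sub, neg_smul, one_smul] at this
      exact this.congr_deriv (by simp [hWdef, sub_eq_add_neg])
    have hAΓs : HasDerivAt (fun s' => A (Γ s' t)) (fderiv ℝ A (Γ s t) (U t)) s :=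
      (hAd (Γ s t)).hasFDerivAt.comp_hasDerivAt s hΓs
    have hinner := hAΓs.inner (𝕜 := ℝ) hVs
    have heq : F s t + P s t
        = (inner ℝ (A (Γ s t)) (W t) : ℝ) + inner ℝ (fderiv ℝ A (Γ s t) (U t)) (V s t) := by
      rw [← dot_eq_inner, ← dot_eq_inner]
      have hanti := clm_antisym (fderiv ℝ A (Γ s t)) (U t) (V s t)
      have hcurl := curl_eq A (Γ s t) (hAd (Γ s t))
      simp only [hFdef, hPdef]
      rw [hcurl, ← hanti]
      ring
    rw [heq]
    have e : (fun s' => g s' t) = fun s' => (inner ℝ (A (Γ s' t)) (V s' t) : ℝ) :=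
      funext fun _ => dot_eq_inner _ _
    rw [e]
    exact hinner
  -- derivative in t of h
  have key2 : ∀ s t, HasDerivAt (fun t' => h s t') (P s t) t := by
    intro s t
    have hΓt : HasDerivAt (fun t' => Γ s t') (V s t) t :=
      ((hσd t).const_smul s).add ((hγd t).const_smul (1 - s))
    have hAΓt : HasDerivAt (fun t' => A (Γ s t')) (fderiv ℝ A (Γ s t) (V s t)) t :=
      (hAd (Γ s t)).hasFDerivAt.comp_hasDerivAt t hΓt
    have hUt : HasDerivAt U (W t) t := (hσd t).sub (hγd t)
    have hinner := hAΓt.inner (𝕜 := ℝ) hUt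
    have heq : P s t
        = (inner ℝ (A (Γ s t)) (W t) : ℝ) + inner ℝ (fderiv ℝ A (Γ s t) (V s t)) (U t) := by
      rw [← dot_eq_inner, ← dot_eq_inner, hPdef]
      ring
    rw [heq]
    have e : (fun t' => h s t') = fun t' => (inner ℝ (A (Γ s t')) (U t') : ℝ) :=
      funext fun _ => dot_eq_inner _ _
    rw [e]
    exact hinner
  -- FTC in s
  have step1 : ∀ t, (∫ s in (0:ℝ)..1, (F s t + P s t))
      = dot (A (σ t)) (deriv σ t) - dot (A (γ t)) (deriv γ t) := by
    intro t
    have hint : IntervalIntegrable (fun s => F s t + P s t) volume 0 1 :=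
      ((hFPc.comp (continuous_id.prodMk continuous_const)).intervalIntegrable 0 1)
    rw [intervalIntegral.integral_eq_sub_of_hasDerivAt (fun s _ => key1 s t) hint]
    simp [hgdef, hΓdef, hVdef]
  -- FTC in t kills P
  have step2 : ∀ s, (∫ t in (0:ℝ)..T, P s t) = 0 := by
    intro s
    have hint : IntervalIntegrable (fun t => P s t) volume 0 T :=
      ((hPc.comp (continuous_const.prodMk continuous_id)).intervalIntegrable 0 T)
    rw [intervalIntegral.integral_eq_sub_of_hasDerivAt (fun t _ => key2 s t) hint]
    simp [hhdef, hUdef, h0, h1, dot]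
  -- Fubini
  have step3 : (∫ t in (0:ℝ)..T, ∫ s in (0:ℝ)..1, (F s t + P s t))
      = ∫ s in (0:ℝ)..1, ∫ t in (0:ℝ)..T, (F s t + P s t) := by
    have hint : Integrable (Function.uncurry fun t s => F s t + P s t)
        ((volume.restrict (Set.Ioc (0:ℝ) T)).prod (volume.restrict (Set.Ioc (0:ℝ) 1))) := by
      rw [Measure.prod_restrict, ← Measure.volume_eq_prod]
      have hc : Continuous (Function.uncurry fun t s => F s t + P s t) :=
        hFPc.comp continuous_swap
      have hI : IntegrableOn (Function.uncurry fun t s => F s t + P s t)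
          ((Set.Icc (0:ℝ) T) ×ˢ (Set.Icc (0:ℝ) 1)) volume :=
        hc.continuousOn.integrableOn_compact (isCompact_Icc.prod isCompact_Icc)
      exact hI.mono_set (Set.prod_mono Set.Ioc_subset_Icc_self Set.Ioc_subset_Icc_self)
    simp only [intervalIntegral.integral_of_le hT.le,
      intervalIntegral.integral_of_le (zero_le_one' ℝ)]
    exact MeasureTheory.integral_integral_swap hint
  -- drop P inside
  have step4 : ∀ s, (∫ t in (0:ℝ)..T, (F s t + P s t)) = ∫ t in (0:ℝ)..T, F s t := by
    intro s
    have hiF : IntervalIntegrable (fun t => F s t) volume 0 T :=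
      ((hFc.comp (continuous_const.prodMk continuous_id)).intervalIntegrable 0 T)
    have hiP : IntervalIntegrable (fun t => P s t) volume 0 T :=
      ((hPc.comp (continuous_const.prodMk continuous_id)).intervalIntegrable 0 T)
    rw [intervalIntegral.integral_add hiF hiP, step2 s, add_zero]
  -- assemble
  have hL1 : IntervalIntegrable (fun t => dot (A (σ t)) (deriv σ t)) volume 0 T :=
    ((dot_cont.comp ((hA.continuous.comp hσc).prodMk hσ'c)).intervalIntegrable 0 T)
  have hL2 : IntervalIntegrable (fun t => dot (A (γ t)) (deriv γ t)) volume 0 T :=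
    ((dot_cont.comp ((hA.continuous.comp hγc).prodMk hγ'c)).intervalIntegrable 0 T)
  calc (∫ t in (0:ℝ)..T, dot (A (σ t)) (deriv σ t))
        - (∫ t in (0:ℝ)..T, dot (A (γ t)) (deriv γ t))
      = ∫ t in (0:ℝ)..T, (dot (A (σ t)) (deriv σ t) - dot (A (γ t)) (deriv γ t)) :=
        (intervalIntegral.integral_sub hL1 hL2).symm
    _ = ∫ t in (0:ℝ)..T, ∫ s in (0:ℝ)..1, (F s t + P s t) :=
        intervalIntegral.integral_congr fun t _ => (step1 t).symm
    _ = ∫ s in (0:ℝ)..1, ∫ t in (0:ℝ)..T, (F s t + P s t) := step3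
    _ = ∫ s in (0:ℝ)..1, ∫ t in (0:ℝ)..T, F s t :=
        intervalIntegral.integral_congr fun s _ => step4 s
    _ = ∫ s in (0:ℝ)..1, ∫ t in (0:ℝ)..T,
          curl A (s • σ t + (1 - s) • γ t) *
            cross (σ t - γ t) (s • deriv σ t + (1 - s) • deriv γ t) := rfl
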